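/- The following are equivalent: (1) E satisfies condition (K) (no vertex has exactly one loop based at it), E is cofinal (for every v ∈ V and every infinite path z there exist n and a finite path from v to r(z_n)), and for every v ∈ V and w ∈ V_∞ there is a finite path from v to w; (2) every loop in E has an exit (for some edge e_i of the loop there is an edge f ≠ e_i with s(f) = s(e_i)), and for every v ∈ V the smallest hereditary saturated subset of V containing v is V itself. -/
import Mathlib


namespace GraphCstar

/-- A directed graph: vertices, edges, source and range maps. -/
structure Graph where
  V : Type
  Ed : Type
  src : Ed → V
  rng : Ed → V

variable (G : Graph)

/-- Validity of a list of edges as a path starting at vertex `v`. -/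
def Valid : G.V → List G.Ed → Prop
  | _, [] => True
  | v, e :: l => G.src e = v ∧ Valid (G.rng e) l

/-- Terminal vertex of a list of edges starting at `v`. -/
def rngTo : G.V → List G.Ed → G.V
  | v, [] => v
  | _, e :: l => rngTo (G.rng e) l

theorem valid_append (l₁ l₂ : List G.Ed) (v : G.V) :
    Valid G v (l₁ ++ l₂) ↔ Valid G v l₁ ∧ Valid G (rngTo G v l₁) l₂ := by
  induction l₁ generalizing v with
  | nil => simp [Valid, rngTo]
  | cons e l ih => simp [Valid, rngTo, ih, and_assoc]

theorem rngTo_append (l₁ l₂ : List G.Ed) (v : G.V) :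
    rngTo G v (l₁ ++ l₂) = rngTo G (rngTo G v l₁) l₂ := by
  induction l₁ generalizing v with
  | nil => rfl
  | cons e l ih => simp [rngTo, ih]

theorem valid_drop {v : G.V} {l : List G.Ed} (n : ℕ) (h : Valid G v l) :
    Valid G (rngTo G v (l.take n)) (l.drop n) := by
  have h' : Valid G v (l.take n ++ l.drop n) := by
    rw [List.take_append_drop]; exact h
  exact ((valid_append G _ _ _).mp h').2

/-- A finite path in the graph `G`; vertices are the paths of length `0`. -/
structure FinPath where
  start : G.V
  edges : List G.Ed
  valid : Valid G start edges

namespace FinPath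

variable {G}

/-- The terminal vertex (range) of a finite path. -/
def rngF (α : FinPath G) : G.V := rngTo G α.start α.edges

/-- The length of a finite path. -/
def len (α : FinPath G) : ℕ := α.edges.length

/-- The finite path of length `0` at the vertex `v`. -/
def vp (v : G.V) : FinPath G := ⟨v, [], trivial⟩

/-- The finite path consisting of the single edge `e`. -/
def ep (e : G.Ed) : FinPath G := ⟨G.src e, [e], ⟨rfl, trivial⟩⟩

/-- Concatenation of finite paths. -/
def concat (α β : FinPath G) (h : β.start = α.rngF) : FinPath G :=
  ⟨α.start, α.edges ++ β.edges,
    (valid_append G _ _ _).mpr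
      ⟨α.valid, by
        show Valid G α.rngF β.edges
        rw [← h]; exact β.valid⟩⟩

theorem rngF_concat (α β : FinPath G) (h : β.start = α.rngF) :
    (α.concat β h).rngF = β.rngF := by
  show rngTo G α.start (α.edges ++ β.edges) = _
  rw [rngTo_append]
  show rngTo G α.rngF β.edges = _
  rw [← h]; rfl

end FinPath

/-- `α` is an initial segment of `β`. -/
def IsPref (α β : FinPath G) : Prop := α.start = β.start ∧ α.edges <+: β.edges

/-- The "remainder" path: if `α` is an initial segment of `β`, the path `μ` with
`β = αμ` (for other inputs the value is junk). -/
def diff (α β : FinPath G) : FinPath G :=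
  ⟨rngTo G β.start (β.edges.take α.edges.length),
    β.edges.drop α.edges.length, valid_drop G _ β.valid⟩

open Classical in
/-- Totalized concatenation of finite paths (junk value when endpoints do not match). -/
noncomputable def catP (α β : FinPath G) : FinPath G :=
  if h : β.start = α.rngF then α.concat β h else α

open Classical in
/-- The product on `T = {(α,β) ∈ Y × Y : r(α) = r(β)} ∪ {z}`, with `z` encoded as `none`. -/
noncomputable def mulT :
    Option (FinPath G × FinPath G) → Option (FinPath G × FinPath G) →
      Option (FinPath G × FinPath G)
  | none, _ => none
  | _, none => none
  | some (α₁, β₁), some (α₂, β₂) =>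
    if IsPref G β₁ α₂ then some (catP G α₁ (diff G β₁ α₂), β₂)
    else if IsPref G α₂ β₁ then some (α₁, catP G β₂ (diff G α₂ β₁))
    else none

/-- The involution on `T`. -/
def starT :
    Option (FinPath G × FinPath G) → Option (FinPath G × FinPath G)
  | none => none
  | some (α, β) => some (β, α)

/-- The subset of `Option (FinPath G × FinPath G)` corresponding to
`T = {(α,β) : r(α) = r(β)} ∪ {z}`. -/
def TsetT : Set (Option (FinPath G × FinPath G)) :=
  {t | ∀ α β : FinPath G, t = some (α, β) → α.rngF = β.rngF}

/-- An infinite path in the graph `G`. -/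
structure InfPath where
  seq : ℕ → G.Ed
  valid : ∀ i, G.src (seq (i + 1)) = G.rng (seq i)

/-- The initial vertex of an infinite path. -/
def InfPath.start {G : Graph} (z : InfPath G) : G.V := G.src (z.seq 0)

/-- Prepending an edge to an infinite path. -/
def consInf (e : G.Ed) (z : InfPath G) (h : z.start = G.rng e) : InfPath G where
  seq := fun n =>
    match n with
    | 0 => e
    | m + 1 => z.seq m
  valid := fun i =>
    match i with
    | 0 => h
    | m + 1 => z.valid m

/-- Prepending a finite edge list to an infinite path (with the starting vertex recorded). -/
def appendInfAux :
    (l : List G.Ed) → (v : G.V) → Valid G v l → (z : InfPath G) →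
      z.start = rngTo G v l → {w : InfPath G // w.start = v}
  | [], _, _, z, h => ⟨z, h⟩
  | e :: l, v, hv, z, h =>
    let w := appendInfAux l (G.rng e) hv.2 z h
    ⟨consInf G e w.1 w.2, hv.1⟩

/-- Concatenation of a finite path with an infinite path. -/
def FinPath.concatInf {G : Graph} (α : FinPath G) (z : InfPath G)
    (h : z.start = α.rngF) : InfPath G :=
  (appendInfAux G α.edges α.start α.valid z h).1

/-- The path space `Y ∪ Z` of all finite and infinite paths. -/
def PathSp := FinPath G ⊕ InfPath G

/-- The initial vertex of a (finite or infinite) path. -/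
def startOf : PathSp G → G.V
  | .inl α => α.start
  | .inr z => z.start

/-- The length of a path, in `ℕ∞`. -/
def lenOf : PathSp G → ℕ∞
  | .inl α => (α.edges.length : ℕ∞)
  | .inr _ => ⊤

/-- The `i`-th edge (0-indexed) of a path, if it exists. -/
def nthEdge : PathSp G → ℕ → Option G.Ed
  | .inl α, i => α.edges[i]?
  | .inr z, i => some (z.seq i)

/-- `x = αγ` for some (finite or infinite, possibly length `0`) path `γ`;
that is, `α` is an initial segment of `x`, i.e. `x ∈ D_α`. -/
def Ext (α : FinPath G) (x : PathSp G) : Prop :=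
  (∃ (β : FinPath G) (h : β.start = α.rngF), x = .inl (α.concat β h)) ∨
  (∃ (w : InfPath G) (h : w.start = α.rngF), x = .inr (α.concatInf w h))

/-- The basic set `D_α ⊆ Y ∪ Z`. -/
def Dset (α : FinPath G) : Set (PathSp G) := {x | Ext G α x}

/-- The topology on the path space, generated by the sets `D_α` and their complements. -/
def pathTop : TopologicalSpace (PathSp G) :=
  .generateFrom (Set.range (Dset G) ∪ Set.range fun α => (Dset G α)ᶜ)

/-- The vertex `v` emits infinitely many edges. -/
def Vinf (v : G.V) : Prop := {e | G.src e = v}.Infinite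

/-- Membership in `X = Y_∞ ∪ Z`. -/
def memX : PathSp G → Prop
  | .inl α => Vinf G α.rngF
  | .inr _ => True

/-- The set `X = Y_∞ ∪ Z`. -/
def Xset : Set (PathSp G) := {x | memX G x}

/-- Tail equivalence of paths: `x = αγ` and `y = βγ` for finite paths `α, β`
and a common (finite or infinite) path `γ`. -/
def TailEq (x y : PathSp G) : Prop :=
  (∃ (α β γ : FinPath G) (h₁ : γ.start = α.rngF) (h₂ : γ.start = β.rngF),
      x = .inl (α.concat γ h₁) ∧ y = .inl (β.concat γ h₂)) ∨
  (∃ (α β : FinPath G) (w : InfPath G) (h₁ : w.start = α.rngF)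
      (h₂ : w.start = β.rngF),
      x = .inr (α.concatInf w h₁) ∧ y = .inr (β.concatInf w h₂))

/-- A subset of the path space is invariant (a union of tail-equivalence classes). -/
def InvariantS (F : Set (PathSp G)) : Prop :=
  ∀ x ∈ F, ∀ y, TailEq G x y → y ∈ F

/-- Membership `(x, k, y) ∈ G` for the path groupoid: `x = αγ`, `y = βγ` and
`k = l(α) - l(β)`. -/
def InG (x : PathSp G) (k : ℤ) (y : PathSp G) : Prop :=
  (∃ (α β γ : FinPath G) (h₁ : γ.start = α.rngF) (h₂ : γ.start = β.rngF),
      x = .inl (α.concat γ h₁) ∧ y = .inl (β.concat γ h₂) ∧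
        k = (α.len : ℤ) - (β.len : ℤ)) ∨
  (∃ (α β : FinPath G) (w : InfPath G) (h₁ : w.start = α.rngF)
      (h₂ : w.start = β.rngF),
      x = .inr (α.concatInf w h₁) ∧ y = .inr (β.concatInf w h₂) ∧
        k = (α.len : ℤ) - (β.len : ℤ))

/-- There is a finite path from `u` to `w`. -/
def Reach (u w : G.V) : Prop := ∃ β : FinPath G, β.start = u ∧ β.rngF = w

/-- A loop based at the vertex `v`. -/
def LoopAt (v : G.V) (α : FinPath G) : Prop :=
  α.edges ≠ [] ∧ α.start = v ∧ α.rngF = v ∧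
    ∀ i e, i + 1 < α.edges.length → α.edges[i]? = some e → G.rng e ≠ v

/-- Condition (K): no vertex has exactly one loop based at it. -/
def CondK : Prop := ¬ ∃ v : G.V, ∃! α : FinPath G, LoopAt G v α

/-- A point of the path space has trivial isotropy if whenever `x = αγ = βγ`
then `l(α) = l(β)`. -/
def TrivIso (x : PathSp G) : Prop :=
  ∀ α β : FinPath G,
    ((∃ (γ : FinPath G) (h₁ : γ.start = α.rngF) (h₂ : γ.start = β.rngF),
        x = .inl (α.concat γ h₁) ∧ x = .inl (β.concat γ h₂)) ∨
     (∃ (w : InfPath G) (h₁ : w.start = α.rngF) (h₂ : w.start = β.rngF),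
        x = .inr (α.concatInf w h₁) ∧ x = .inr (β.concatInf w h₂))) →
    α.len = β.len


/-- A subset `H ⊆ V` is hereditary. -/
def Hered (H : Set G.V) : Prop := ∀ v ∈ H, ∀ w : G.V, Reach G v w → w ∈ H

/-- A subset `H ⊆ V` is saturated. -/
def Satur (H : Set G.V) : Prop :=
  ∀ w : G.V, {e : G.Ed | G.src e = w}.Finite →
    (∀ e : G.Ed, G.src e = w → G.rng e ∈ H) → w ∈ H

/-- The loop `α` has an exit: for some edge `e_i` of `α` there is an edge `f ≠ e_i`
with `s(f) = s(e_i)`. -/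
def HasExit (α : FinPath G) : Prop :=
  ∃ (i : ℕ) (e : G.Ed), α.edges[i]? = some e ∧ ∃ f : G.Ed, f ≠ e ∧ G.src f = G.src e

/- ### Auxiliary lemmas -/

theorem reach_refl (u : G.V) : Reach G u u := ⟨⟨u, [], trivial⟩, rfl, rfl⟩

theorem reach_trans {u v w : G.V} (h₁ : Reach G u v) (h₂ : Reach G v w) :
    Reach G u w := by
  obtain ⟨α, hα1, hα2⟩ := h₁
  obtain ⟨β, hβ1, hβ2⟩ := h₂
  refine ⟨α.concat β (hβ1.trans hα2.symm), hα1, ?_⟩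
  rw [FinPath.rngF_concat]; exact hβ2

theorem valid_take {v : G.V} {l : List G.Ed} (n : ℕ) (h : Valid G v l) :
    Valid G v (l.take n) := by
  have h' : Valid G v (l.take n ++ l.drop n) := by
    rw [List.take_append_drop]; exact h
  exact ((valid_append G _ _ _).mp h').1

theorem finpath_ext {G : Graph} {α β : FinPath G} (h1 : α.start = β.start)
    (h2 : α.edges = β.edges) : α = β := by
  cases α; cases β
  simp only at h1 h2
  subst h1; subst h2; rfl

theorem getElem?_src_rng (G : Graph) :
    ∀ (l : List G.Ed) (v : G.V) (j : ℕ) (e : G.Ed), Valid G v l → l[j]? = some e →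
      G.src e = rngTo G v (l.take j) ∧ rngTo G v (l.take (j + 1)) = G.rng e := by
  intro l
  induction l with
  | nil => intro v j e _ hj; simp at hj
  | cons a t ih =>
    intro v j e hv hj
    cases j with
    | zero =>
      simp only [List.getElem?_cons_zero, Option.some.injEq] at hj
      subst hj
      exact ⟨hv.1, rfl⟩
    | succ j =>
      simp only [List.getElem?_cons_succ] at hj
      exact ih (G.rng a) j e hv.2 hj

/-- Unique continuation: a loop with no exit is followed by any other first-return path. -/
theorem unique_cont (G : Graph) (v : G.V) :
    ∀ (l₁ : List G.Ed) (w : G.V) (l₂ : List G.Ed),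
      Valid G w l₁ → Valid G w l₂ →
      rngTo G w l₁ = v → rngTo G w l₂ = v →
      (∀ j e, j + 1 < l₁.length → l₁[j]? = some e → G.rng e ≠ v) →
      (∀ j e, j + 1 < l₂.length → l₂[j]? = some e → G.rng e ≠ v) →
      (l₁ = [] ↔ l₂ = []) →
      (∀ (j : ℕ) (e : G.Ed), l₁[j]? = some e → ∀ f, G.src f = G.src e → f = e) →
      l₂ = l₁ := by
  intro l₁
  induction l₁ with
  | nil =>
    intro w l₂ _ _ _ _ _ _ hiff _
    exact hiff.mp rfl
  | cons e₁ t₁ ih =>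
    intro w l₂ hv₁ hv₂ hr₁ hr₂ hm₁ hm₂ hiff hdet
    cases l₂ with
    | nil => exact absurd (hiff.mpr rfl) (by simp)
    | cons e₂ t₂ =>
      have he : e₂ = e₁ := by
        apply hdet 0 e₁ (by simp)
        rw [hv₂.1, hv₁.1]
      subst he
      have ht : t₂ = t₁ := by
        apply ih (G.rng e₂) t₂ hv₁.2 hv₂.2 hr₁ hr₂
        · intro j e hj hje
          refine hm₁ (j + 1) e ?_ ?_
          · simp only [List.length_cons]; omega
          · rw [List.getElem?_cons_succ]; exact hje
        · intro j e hj hje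
          refine hm₂ (j + 1) e ?_ ?_
          · simp only [List.length_cons]; omega
          · rw [List.getElem?_cons_succ]; exact hje
        · constructor
          · intro h1
            subst h1
            by_contra h2
            exact hm₂ 0 e₂ (by simp [List.length_pos_iff.mpr h2]) (by simp) hr₁
          · intro h2
            subst h2
            by_contra h1
            exact hm₁ 0 e₂ (by simp [List.length_pos_iff.mpr h1]) (by simp) hr₂
        · intro j e hje f hf
          refine hdet (j + 1) e ?_ f hf
          rw [List.getElem?_cons_succ]; exact hje
      rw [ht]

/-- Extracting the first-return loop from a closed path of positive length. -/
theorem loop_of_return (G : Graph) (v : G.V) (l : List G.Ed) (hne : l ≠ [])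
    (hval : Valid G v l) (hrng : rngTo G v l = v) :
    ∃ β : FinPath G, LoopAt G v β ∧ ∃ n : ℕ, 1 ≤ n ∧ β.edges = l.take n := by
  classical
  have hlp : 0 < l.length := List.length_pos_iff.mpr hne
  have hP : ∃ n, 1 ≤ n ∧ rngTo G v (l.take n) = v :=
    ⟨l.length, hlp, by rw [List.take_length]; exact hrng⟩
  let P : ℕ → Prop := fun n => 1 ≤ n ∧ rngTo G v (l.take n) = v
  have : DecidablePred P := Classical.decPred P
  obtain ⟨⟨hn1, hn2⟩, hmin⟩ : P (Nat.find hP) ∧ ∀ m, m < Nat.find hP → ¬ P m :=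
    ⟨Nat.find_spec hP, fun m hm => Nat.find_min hP hm⟩
  set n := Nat.find hP with hn
  refine ⟨⟨v, l.take n, valid_take G n hval⟩, ⟨?_, rfl, hn2, ?_⟩, n, hn1, rfl⟩
  · simp only [ne_eq, List.take_eq_nil_iff]
    push_neg
    exact ⟨by omega, hne⟩
  · intro j e hj hje
    simp only [List.length_take, lt_min_iff] at hj
    have hje' : l[j]? = some e := by
      rwa [List.getElem?_take_of_lt (by omega)] at hje
    have := (getElem?_src_rng G l v j e hval hje').2
    rw [← this]
    intro hcon
    exact hmin (j + 1) hj.1 ⟨by omega, hcon⟩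

theorem index_lt_of_getElem? {α : Type} {l : List α} {i : ℕ} {a : α}
    (h : l[i]? = some a) : i < l.length := by
  by_contra hc
  push_neg at hc
  rw [List.getElem?_eq_none hc] at h
  cases h

/-- The conditions (K), cofinality, and reachability of every
`V_∞`-vertex from every vertex together are equivalent to: every loop has an exit, and
for every vertex `v` the smallest hereditary saturated subset of `V` containing `v` is
`V` itself. -/
theorem szymanski_conditions_equiv (G : Graph) [Countable G.V] [Countable G.Ed]
    (hns : ∀ v : G.V, ∃ e : G.Ed, G.src e = v) :
    (CondK G ∧
      (∀ (v : G.V) (z : InfPath G), ∃ n : ℕ, Reach G v (G.rng (z.seq n))) ∧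
      (∀ v w : G.V, Vinf G w → Reach G v w)) ↔
    ((∀ (v : G.V) (α : FinPath G), LoopAt G v α → HasExit G α) ∧
      (∀ v : G.V, ∀ H : Set G.V, Hered G H → Satur G H → v ∈ H → H = Set.univ)) := by
  constructor
  · rintro ⟨hK, hcof, hreach⟩
    constructor
    · -- every loop has an exit
      intro v α hα
      by_contra hne
      apply hK
      refine ⟨v, α, hα, ?_⟩
      intro β hβ
      unfold HasExit at hne
      push_neg at hne
      have hdet : ∀ (j : ℕ) (e : G.Ed), α.edges[j]? = some e → ∀ f, G.src f = G.src e → f = e := by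
        intro j e hje f hsf
        by_contra hfe
        exact hne j e hje f hfe hsf
      obtain ⟨hαne, hαs, hαr, hαm⟩ := hα
      obtain ⟨hβne, hβs, hβr, hβm⟩ := hβ
      have hvα : Valid G v α.edges := by rw [← hαs]; exact α.valid
      have hvβ : Valid G v β.edges := by rw [← hβs]; exact β.valid
      have hrα : rngTo G v α.edges = v := by
        have h : rngTo G α.start α.edges = v := hαr
        rwa [hαs] at h
      have hrβ : rngTo G v β.edges = v := by
        have h : rngTo G β.start β.edges = v := hβr
        rwa [hβs] at h
      have hedges : β.edges = α.edges :=
        unique_cont G v α.edges v β.edges hvα hvβ hrα hrβ hαm hβm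
          (iff_of_false hαne hβne) hdet
      exact finpath_ext (hβs.trans hαs.symm) hedges
    · -- smallest hereditary saturated set is V
      intro v H hHer hSat hv
      ext u
      simp only [Set.mem_univ, iff_true]
      by_contra hu
      have hVinf : ∀ t, Vinf G t → t ∈ H := fun t ht => hHer v hv t (hreach v t ht)
      have step : ∀ x : G.V, x ∉ H → ∃ e, G.src e = x ∧ G.rng e ∉ H := by
        intro x hx
        by_contra hc
        push_neg at hc
        rcases Set.finite_or_infinite {e : G.Ed | G.src e = x} with hfin | hinf
        · exact hx (hSat x hfin hc)
        · exact hx (hVinf x hinf)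
      choose f hf1 hf2 using fun x : {x : G.V // x ∉ H} => step x.1 x.2
      let useq : ℕ → {x : G.V // x ∉ H} := fun n =>
        Nat.rec ⟨u, hu⟩ (fun _ p => ⟨G.rng (f p), hf2 p⟩) n
      let z : InfPath G :=
        ⟨fun n => f (useq n), fun i => (hf1 (useq (i + 1))).trans rfl⟩
      obtain ⟨n, hn⟩ := hcof v z
      have hn' : Reach G v (useq (n + 1)).1 := hn
      exact (useq (n + 1)).2 (hHer v hv _ hn')
  · rintro ⟨hL, hClos⟩
    -- first derive cofinality
    have hcof : ∀ (v : G.V) (z : InfPath G), ∃ n : ℕ, Reach G v (G.rng (z.seq n)) := by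
      intro v z
      by_contra hc
      push_neg at hc
      set H : Set G.V := {u | ∀ n, ¬ Reach G u (G.rng (z.seq n))} with hH
      have hHer : Hered G H := by
        intro x hx w hxw n hw
        exact hx n (reach_trans G hxw hw)
      have hSat : Satur G H := by
        intro w _ hall n hw
        obtain ⟨β, hβ1, hβ2⟩ := hw
        rcases hβe : β.edges with _ | ⟨e, rest⟩
        · -- w = rng (z.seq n); use the next edge of z
          have hw' : w = G.rng (z.seq n) := by
            rw [← hβ1, ← hβ2]
            show β.start = rngTo G β.start β.edges
            rw [hβe]; rfl
          have hsrc : G.src (z.seq (n + 1)) = w := by rw [z.valid n, ← hw']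
          exact hall (z.seq (n + 1)) hsrc (n + 1)
            ⟨⟨G.rng (z.seq (n + 1)), [], trivial⟩, rfl, rfl⟩
        · have hval : Valid G β.start (e :: rest) := by rw [← hβe]; exact β.valid
          have hsrc : G.src e = w := by rw [hval.1, hβ1]
          apply hall e hsrc n
          refine ⟨⟨G.rng e, rest, hval.2⟩, rfl, ?_⟩
          show rngTo G (G.rng e) rest = _
          have : rngTo G β.start β.edges = G.rng (z.seq n) := hβ2
          rw [hβe] at this
          exact this
      have hvH : v ∈ H := hc
      have := hClos v H hHer hSat hvH
      have h0 : G.rng (z.seq 0) ∈ H := this ▸ Set.mem_univ _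
      exact h0 0 (reach_refl G _)
    have hback : ∀ t : G.V,
        (∀ w : G.V, {e : G.Ed | G.src e = w}.Finite →
          (∀ e : G.Ed, G.src e = w → ¬ Reach G (G.rng e) t) → ¬ Reach G w t) →
        ∀ u : G.V, Reach G u t := by
      intro t hsatcase u
      by_contra hc
      set H : Set G.V := {x | ¬ Reach G x t} with hH
      have hHer : Hered G H := by
        intro x hx w hxw hw
        exact hx (reach_trans G hxw hw)
      have hSat : Satur G H := fun w hfin hall => hsatcase w hfin hall
      have := hClos u H hHer hSat hc
      have ht : t ∈ H := this ▸ Set.mem_univ _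
      exact ht (reach_refl G t)
    constructor
    · -- condition (K)
      rintro ⟨v, α, hα, huniq⟩
      obtain ⟨i, e, hie, f, hfe, hsf⟩ := hL v α hα
      obtain ⟨hαne, hαs, hαr, hαm⟩ := hα
      have hi : i < α.edges.length := index_lt_of_getElem? hie
      have hvα : Valid G v α.edges := by rw [← hαs]; exact α.valid
      have hrα : rngTo G v α.edges = v := by
        have h : rngTo G α.start α.edges = v := hαr
        rwa [hαs] at h
      -- Reach (rng f) v
      have hRf : Reach G (G.rng f) v := by
        apply hback v _ (G.rng f)
        intro w hfin hall hw
        obtain ⟨β, hβ1, hβ2⟩ := hw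
        rcases hβe : β.edges with _ | ⟨e₀, rest⟩
        · -- w = v; use first edge of the loop α
          have hw' : w = v := by
            rw [← hβ1, ← hβ2]
            show β.start = rngTo G β.start β.edges
            rw [hβe]; rfl
          rcases hαe : α.edges with _ | ⟨a, arest⟩
          · exact hαne hαe
          · have hval : Valid G v (a :: arest) := by rw [← hαe]; exact hvα
            apply hall a (by rw [hval.1, hw'])
            refine ⟨⟨G.rng a, arest, hval.2⟩, rfl, ?_⟩
            show rngTo G (G.rng a) arest = v
            have : rngTo G v α.edges = v := hrα
            rw [hαe] at this
            exact this
        · have hval : Valid G β.start (e₀ :: rest) := by rw [← hβe]; exact β.valid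
          apply hall e₀ (by rw [hval.1, hβ1])
          refine ⟨⟨G.rng e₀, rest, hval.2⟩, rfl, ?_⟩
          show rngTo G (G.rng e₀) rest = v
          have : rngTo G β.start β.edges = v := hβ2
          rw [hβe] at this
          exact this
      obtain ⟨δ, hδ1, hδ2⟩ := hRf
      -- build the closed path l from v to v through the exit f
      have hse : G.src e = rngTo G v (α.edges.take i) :=
        (getElem?_src_rng G α.edges v i e hvα hie).1
      set l : List G.Ed := α.edges.take i ++ f :: δ.edges with hl
      have hvl : Valid G v l := by
        rw [hl, valid_append]
        refine ⟨valid_take G i hvα, ?_, ?_⟩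
        · rw [hsf, hse]
        · show Valid G (G.rng f) δ.edges
          rw [← hδ1]; exact δ.valid
      have hrl : rngTo G v l = v := by
        rw [hl, rngTo_append]
        show rngTo G (G.rng f) δ.edges = v
        rw [← hδ1]; exact hδ2
      have hlne : l ≠ [] := by rw [hl]; simp
      obtain ⟨β, hβloop, n, hn1, hβe⟩ := loop_of_return G v l hlne hvl hrl
      have hβα : β = α := huniq β hβloop
      rcases le_or_gt n i with hni | hni
      · -- impossible: β.edges would be a short prefix of α.edges
        have hlen : i ≤ (α.edges.take i).length := by
          rw [List.length_take]; omega
        have : β.edges = α.edges.take n := by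
          rw [hβe, hl, List.take_append]
          have h1 : n - (α.edges.take i).length = 0 := by omega
          rw [h1, List.take_take]
          simp [Nat.min_eq_left hni]
        rw [hβα] at this
        have hlen2 : α.edges.length = min n α.edges.length := by
          conv_lhs => rw [this]
          rw [List.length_take]
        omega
      · -- β.edges[i]? = some f, but β = α forces f = e
        have hgf : β.edges[i]? = some f := by
          rw [hβe, List.getElem?_take_of_lt hni, hl]
          rw [List.getElem?_append_right (by rw [List.length_take]; omega)]
          simp [List.length_take, Nat.min_eq_left (le_of_lt hi)]
        rw [hβα, hie] at hgf
        exact hfe (Option.some.injEq _ _ ▸ hgf.symm)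
    · refine ⟨hcof, ?_⟩
      intro v w hw
      apply hback w _ v
      intro x hfin hall hx
      obtain ⟨β, hβ1, hβ2⟩ := hx
      rcases hβe : β.edges with _ | ⟨e₀, rest⟩
      · have hxw : x = w := by
          rw [← hβ1, ← hβ2]
          show β.start = rngTo G β.start β.edges
          rw [hβe]; rfl
        rw [hxw] at hfin
        exact hw hfin
      · have hval : Valid G β.start (e₀ :: rest) := by rw [← hβe]; exact β.valid
        apply hall e₀ (by rw [hval.1, hβ1])
        refine ⟨⟨G.rng e₀, rest, hval.2⟩, rfl, ?_⟩
        show rngTo G (G.rng e₀) rest = w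
        have h2 : rngTo G β.start β.edges = w := hβ2
        rw [hβe] at h2
        exact h2

end GraphCstar
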